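/- Let N ≥ 1, R ≥ 1, dimensions I_1,…,I_N ≥ 1, let Z and Δ be N-way tensors (functions from Π_{n=1}^N Fin(I_n) to ℝ) with Δ taking values in {0,1}, let λ > 0, and for each n let R_n be an I_n × I_n diagonal matrix with strictly positive diagonal entries. Then the infimum over all factor tuples A = (A^(1),…,A^(N)), A^(n) ∈ ℝ^{I_n × R} with columns a_r^(n), of f₁(A) := (1/2)·Σ_i Δ(i)·(Z(i) − Σ_{r=1}^R Π_{n=1}^N A^(n)(i_n,r))² + (λ/2)·Σ_{r=1}^R Σ_{n=1}^N (a_r^(n))ᵀ R_n^{-1} a_r^(n) equals the infimum over all tuples of unit vectors ũ_r^(n) ∈ ℝ^{I_n} (‖ũ_r^(n)‖₂ = 1) and nonnegative scalars γ̃_1,…,γ̃_R of f₂(Ũ,γ̃) := (1/2)·Σ_i Δ(i)·(Z(i) − Σ_{r=1}^R γ̃_r Π_{n=1}^N (R_n^{1/2} ũ_r^(n))(i_n))² + (λN/2)·Σ_{r=1}^R γ̃_r^{2/N}, where R_n^{1/2} is the diagonal matrix of entrywise square roots of R_n. -/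

import Mathlib

open Finset

/-- The elastic-net-free (pure ℓ₂) PARAFAC objective `f₁` over factor tuples,
with each diagonal covariance matrix `R_n` represented by its diagonal `Rm n`. -/
noncomputable def f1 (N R : ℕ) (I : Fin N → ℕ)
    (Z Δ : (∀ n : Fin N, Fin (I n)) → ℝ) (lam : ℝ)
    (Rm : ∀ n : Fin N, Fin (I n) → ℝ)
    (A : ∀ n : Fin N, Fin (I n) → Fin R → ℝ) : ℝ :=
  (1 / 2) * ∑ i : (∀ n : Fin N, Fin (I n)),
      Δ i * (Z i - ∑ r : Fin R, ∏ n : Fin N, A n (i n) r) ^ 2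
    + (lam / 2) * ∑ r : Fin R, ∑ n : Fin N, ∑ j : Fin (I n),
      A n j r * (Rm n j)⁻¹ * A n j r

/-- The rescaled objective `f₂` over tuples of unit vectors and nonnegative weights. -/
noncomputable def f2 (N R : ℕ) (I : Fin N → ℕ)
    (Z Δ : (∀ n : Fin N, Fin (I n)) → ℝ) (lam : ℝ)
    (Rm : ∀ n : Fin N, Fin (I n) → ℝ)
    (U : ∀ n : Fin N, Fin R → Fin (I n) → ℝ) (γ : Fin R → ℝ) : ℝ :=
  (1 / 2) * ∑ i : (∀ n : Fin N, Fin (I n)),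
      Δ i * (Z i - ∑ r : Fin R, γ r * ∏ n : Fin N, Real.sqrt (Rm n (i n)) * U n r (i n)) ^ 2
    + (lam * N / 2) * ∑ r : Fin R, γ r ^ ((2 : ℝ) / N)

section Aux

variable {N R : ℕ} {I : Fin N → ℕ}
  {Z Δ : (∀ n : Fin N, Fin (I n)) → ℝ} {lam : ℝ}
  {Rm : ∀ n : Fin N, Fin (I n) → ℝ}

lemma f1_nonneg (hΔ : ∀ i, Δ i = 0 ∨ Δ i = 1) (hlam : 0 < lam)
    (hRm : ∀ n j, 0 < Rm n j) (A : ∀ n : Fin N, Fin (I n) → Fin R → ℝ) :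
    0 ≤ f1 N R I Z Δ lam Rm A := by
  unfold f1
  have h1 : 0 ≤ ∑ i : (∀ n : Fin N, Fin (I n)),
      Δ i * (Z i - ∑ r : Fin R, ∏ n : Fin N, A n (i n) r) ^ 2 := by
    apply Finset.sum_nonneg
    intro i _
    have : 0 ≤ Δ i := by rcases hΔ i with h | h <;> rw [h] <;> norm_num
    positivity
  have h2 : 0 ≤ ∑ r : Fin R, ∑ n : Fin N, ∑ j : Fin (I n),
      A n j r * (Rm n j)⁻¹ * A n j r := by
    apply Finset.sum_nonneg; intro r _
    apply Finset.sum_nonneg; intro n _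
    apply Finset.sum_nonneg; intro j _
    have h : A n j r * (Rm n j)⁻¹ * A n j r = A n j r ^ 2 * (Rm n j)⁻¹ := by ring
    rw [h]
    have := (hRm n j)
    positivity
  positivity

lemma f2_nonneg (hΔ : ∀ i, Δ i = 0 ∨ Δ i = 1) (hlam : 0 < lam)
    (U : ∀ n : Fin N, Fin R → Fin (I n) → ℝ) (γ : Fin R → ℝ) (hγ : ∀ r, 0 ≤ γ r) :
    0 ≤ f2 N R I Z Δ lam Rm U γ := by
  unfold f2
  have h1 : 0 ≤ ∑ i : (∀ n : Fin N, Fin (I n)),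
      Δ i * (Z i - ∑ r : Fin R, γ r * ∏ n : Fin N,
        Real.sqrt (Rm n (i n)) * U n r (i n)) ^ 2 := by
    apply Finset.sum_nonneg
    intro i _
    have : 0 ≤ Δ i := by rcases hΔ i with h | h <;> rw [h] <;> norm_num
    positivity
  have h2 : 0 ≤ ∑ r : Fin R, γ r ^ ((2 : ℝ) / N) := by
    apply Finset.sum_nonneg; intro r _
    exact Real.rpow_nonneg (hγ r) _
  have hc : (0:ℝ) ≤ lam * N / 2 := by positivity
  positivity

/-- Direction 1: from a feasible point of problem (14) build a factor tuple with
the same objective value. -/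
lemma construct1 (hN : 1 ≤ N)
    (hRm : ∀ n j, 0 < Rm n j)
    (U : ∀ n : Fin N, Fin R → Fin (I n) → ℝ) (γ : Fin R → ℝ)
    (hU : ∀ n r, ∑ j : Fin (I n), U n r j ^ 2 = 1) (hγ : ∀ r, 0 ≤ γ r) :
    f1 N R I Z Δ lam Rm
      (fun n j r => γ r ^ ((1:ℝ)/N) * (Real.sqrt (Rm n j) * U n r j)) =
    f2 N R I Z Δ lam Rm U γ := by
  have hN0 : (N:ℝ) ≠ 0 := by positivity
  unfold f1 f2
  have hprod : ∀ (r : Fin R) (i : ∀ n : Fin N, Fin (I n)),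
      (∏ n : Fin N, γ r ^ ((1:ℝ)/N) * (Real.sqrt (Rm n (i n)) * U n r (i n))) =
      γ r * ∏ n : Fin N, Real.sqrt (Rm n (i n)) * U n r (i n) := by
    intro r i
    rw [Finset.prod_mul_distrib, Finset.prod_const, Finset.card_univ, Fintype.card_fin]
    congr 1
    rw [← Real.rpow_natCast (γ r ^ ((1:ℝ)/N)) N, ← Real.rpow_mul (hγ r)]
    rw [one_div, inv_mul_cancel₀ hN0, Real.rpow_one]
  have hpen : ∀ (r : Fin R) (n : Fin N),
      (∑ j : Fin (I n), (γ r ^ ((1:ℝ)/N) * (Real.sqrt (Rm n j) * U n r j)) * (Rm n j)⁻¹ *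
        (γ r ^ ((1:ℝ)/N) * (Real.sqrt (Rm n j) * U n r j))) = γ r ^ ((2:ℝ)/N) := by
    intro r n
    have hterm : ∀ j : Fin (I n),
        (γ r ^ ((1:ℝ)/N) * (Real.sqrt (Rm n j) * U n r j)) * (Rm n j)⁻¹ *
        (γ r ^ ((1:ℝ)/N) * (Real.sqrt (Rm n j) * U n r j)) =
        γ r ^ ((2:ℝ)/N) * U n r j ^ 2 := by
      intro j
      have hs : Real.sqrt (Rm n j) * Real.sqrt (Rm n j) = Rm n j :=
        Real.mul_self_sqrt (hRm n j).le
      have h2N : (1:ℝ)/N + (1:ℝ)/N = 2/N := by ring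
      have hg : γ r ^ ((1:ℝ)/N) * γ r ^ ((1:ℝ)/N) = γ r ^ ((2:ℝ)/N) := by
        rw [← Real.rpow_add' (hγ r) (by rw [h2N]; exact div_ne_zero two_ne_zero hN0), h2N]
      have hRne : Rm n j ≠ 0 := (hRm n j).ne'
      field_simp
      rw [Real.sq_sqrt (hRm n j).le, ← hg]; ring
    rw [Finset.sum_congr rfl (fun j _ => hterm j), ← Finset.mul_sum, hU n r, mul_one]
  have hdata : (∑ i : (∀ n : Fin N, Fin (I n)),
      Δ i * (Z i - ∑ r : Fin R, ∏ n : Fin N,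
        γ r ^ ((1:ℝ)/N) * (Real.sqrt (Rm n (i n)) * U n r (i n))) ^ 2) =
      ∑ i : (∀ n : Fin N, Fin (I n)),
      Δ i * (Z i - ∑ r : Fin R, γ r * ∏ n : Fin N,
        Real.sqrt (Rm n (i n)) * U n r (i n)) ^ 2 := by
    apply Finset.sum_congr rfl
    intro i _
    rw [Finset.sum_congr rfl (fun r (_ : r ∈ Finset.univ) => hprod r i)]
  rw [hdata]
  congr 1
  have : (∑ r : Fin R, ∑ n : Fin N, ∑ j : Fin (I n),
      (γ r ^ ((1:ℝ)/N) * (Real.sqrt (Rm n j) * U n r j)) * (Rm n j)⁻¹ *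
        (γ r ^ ((1:ℝ)/N) * (Real.sqrt (Rm n j) * U n r j))) =
      ∑ r : Fin R, (N : ℝ) * γ r ^ ((2:ℝ)/N) := by
    apply Finset.sum_congr rfl
    intro r _
    rw [Finset.sum_congr rfl (fun n _ => hpen r n), Finset.sum_const, Finset.card_univ,
      Fintype.card_fin, nsmul_eq_mul]
  rw [this, Finset.mul_sum, Finset.mul_sum]
  apply Finset.sum_congr rfl
  intro r _
  ring

/-- Direction 2: from any factor tuple build a feasible point of problem (14)
with objective value at most `f1`. -/
lemma construct2 (hN : 1 ≤ N) (hI : ∀ n, 1 ≤ I n) (hlam : 0 < lam)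
    (hRm : ∀ n j, 0 < Rm n j) (A : ∀ n : Fin N, Fin (I n) → Fin R → ℝ) :
    ∃ (U : ∀ n : Fin N, Fin R → Fin (I n) → ℝ) (γ : Fin R → ℝ),
      (∀ n r, ∑ j : Fin (I n), U n r j ^ 2 = 1) ∧ (∀ r, 0 ≤ γ r) ∧
      f2 N R I Z Δ lam Rm U γ ≤ f1 N R I Z Δ lam Rm A := by
  have hN0 : (N:ℝ) ≠ 0 := by positivity
  set s : Fin N → Fin R → ℝ :=
    fun n r => Real.sqrt (∑ j : Fin (I n), A n j r ^ 2 / Rm n j) with hs_def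
  have hs_nonneg : ∀ n r, 0 ≤ s n r := fun n r => Real.sqrt_nonneg _
  have hsum_nonneg : ∀ n r, 0 ≤ ∑ j : Fin (I n), A n j r ^ 2 / Rm n j := by
    intro n r
    apply Finset.sum_nonneg
    intro j _
    have := hRm n j
    positivity
  have hs_sq : ∀ n r, s n r ^ 2 = ∑ j : Fin (I n), A n j r ^ 2 / Rm n j :=
    fun n r => Real.sq_sqrt (hsum_nonneg n r)
  have hA_zero : ∀ n r, s n r = 0 → ∀ j, A n j r = 0 := by
    intro n r h j
    have hsum : (∑ j : Fin (I n), A n j r ^ 2 / Rm n j) = 0 := by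
      have := hs_sq n r
      rw [h] at this
      simpa using this.symm
    have hterm := (Finset.sum_eq_zero_iff_of_nonneg
      (fun j _ => by have := hRm n j; positivity)).mp hsum j (Finset.mem_univ j)
    have hA2 : A n j r ^ 2 = 0 := by
      rcases div_eq_zero_iff.mp hterm with h' | h'
      · exact h'
      · exact absurd h' (hRm n j).ne'
    exact sq_eq_zero_iff.mp hA2
  refine ⟨fun n r j => if s n r = 0 then (if j = ⟨0, hI n⟩ then 1 else 0)
      else A n j r / (Real.sqrt (Rm n j) * s n r),
    fun r => ∏ n : Fin N, s n r, ?_, ?_, ?_⟩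
  · -- unit norms
    intro n r
    by_cases h : s n r = 0
    · simp only [if_pos h]
      have hterm : ∀ j : Fin (I n),
          ((if j = (⟨0, hI n⟩ : Fin (I n)) then (1:ℝ) else 0)) ^ 2 =
          if j = (⟨0, hI n⟩ : Fin (I n)) then (1:ℝ) else 0 := by
        intro j; split <;> norm_num
      rw [Finset.sum_congr rfl (fun j _ => hterm j)]
      simp
    · simp only [if_neg h]
      have hterm : ∀ j : Fin (I n),
          (A n j r / (Real.sqrt (Rm n j) * s n r)) ^ 2 =
          (A n j r ^ 2 / Rm n j) / s n r ^ 2 := by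
        intro j
        rw [div_pow, mul_pow, Real.sq_sqrt (hRm n j).le, div_div]
      rw [Finset.sum_congr rfl (fun j _ => hterm j), ← Finset.sum_div, ← hs_sq n r,
        div_self (pow_ne_zero 2 h)]
  · -- nonnegativity of γ
    intro r
    exact Finset.prod_nonneg fun n _ => hs_nonneg n r
  · -- objective inequality
    unfold f1 f2
    have hdata : ∀ (r : Fin R) (i : ∀ n : Fin N, Fin (I n)),
        (∏ n : Fin N, s n r) * (∏ n : Fin N, Real.sqrt (Rm n (i n)) *
          (if s n r = 0 then (if i n = ⟨0, hI n⟩ then 1 else 0)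
            else A n (i n) r / (Real.sqrt (Rm n (i n)) * s n r))) =
        ∏ n : Fin N, A n (i n) r := by
      intro r i
      by_cases hex : ∃ n, s n r = 0
      · obtain ⟨n0, hn0⟩ := hex
        rw [Finset.prod_eq_zero (Finset.mem_univ n0) hn0, zero_mul,
          Finset.prod_eq_zero (Finset.mem_univ n0) (hA_zero n0 r hn0 (i n0))]
      · push_neg at hex
        rw [← Finset.prod_mul_distrib]
        apply Finset.prod_congr rfl
        intro n _
        rw [if_neg (hex n)]
        have h1 : Real.sqrt (Rm n (i n)) ≠ 0 := by
          rw [Real.sqrt_ne_zero']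
          exact hRm n (i n)
        calc s n r * (Real.sqrt (Rm n (i n)) * (A n (i n) r /
              (Real.sqrt (Rm n (i n)) * s n r)))
            = (s n r * (s n r)⁻¹) * (Real.sqrt (Rm n (i n)) *
                (Real.sqrt (Rm n (i n)))⁻¹) * A n (i n) r := by
              rw [div_eq_mul_inv, mul_inv]
              ring
          _ = A n (i n) r := by
              rw [mul_inv_cancel₀ (hex n), mul_inv_cancel₀ h1, one_mul, one_mul]
    have hpen : ∀ r : Fin R,
        (N : ℝ) * (∏ n : Fin N, s n r) ^ ((2:ℝ)/N) ≤
        ∑ n : Fin N, ∑ j : Fin (I n), A n j r * (Rm n j)⁻¹ * A n j r := by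
      intro r
      have hrhs : (∑ n : Fin N, ∑ j : Fin (I n), A n j r * (Rm n j)⁻¹ * A n j r) =
          ∑ n : Fin N, s n r ^ 2 := by
        apply Finset.sum_congr rfl
        intro n _
        rw [hs_sq n r]
        apply Finset.sum_congr rfl
        intro j _
        rw [pow_two, div_eq_mul_inv]
        ring
      have hsn : ∀ n : Fin N, (s n r ^ 2) ^ ((1:ℝ)/N) = s n r ^ ((2:ℝ)/N) := by
        intro n
        rw [← Real.rpow_natCast (s n r) 2, ← Real.rpow_mul (hs_nonneg n r)]
        congr 1
        push_cast
        ring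
      have key : (∏ n : Fin N, s n r) ^ ((2:ℝ)/N) =
          ∏ n : Fin N, (s n r ^ 2) ^ ((1:ℝ)/N) := by
        rw [← Real.finset_prod_rpow Finset.univ _ (fun n _ => hs_nonneg n r)]
        exact Finset.prod_congr rfl fun n _ => (hsn n).symm
      have amgm := Real.geom_mean_le_arith_mean_weighted Finset.univ
        (fun _ : Fin N => (1:ℝ)/N) (fun n => s n r ^ 2)
        (fun n _ => by positivity)
        (by
          rw [Finset.sum_const, Finset.card_univ, Fintype.card_fin, nsmul_eq_mul]
          field_simp)
        (fun n _ => by positivity)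
      rw [hrhs, key]
      calc (N : ℝ) * ∏ n : Fin N, (s n r ^ 2) ^ ((1:ℝ)/N)
          ≤ (N : ℝ) * ∑ n : Fin N, (1:ℝ)/N * s n r ^ 2 := by
            apply mul_le_mul_of_nonneg_left amgm
            exact Nat.cast_nonneg N
        _ = ∑ n : Fin N, s n r ^ 2 := by
            rw [← Finset.mul_sum, ← mul_assoc]
            field_simp
    apply add_le_add
    · apply le_of_eq
      apply congrArg
      apply Finset.sum_congr rfl
      intro i _
      rw [Finset.sum_congr rfl (fun r (_ : r ∈ Finset.univ) => hdata r i)]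
    · calc lam * N / 2 * ∑ r : Fin R, (∏ n : Fin N, s n r) ^ ((2:ℝ)/N)
          = lam / 2 * ∑ r : Fin R, (N : ℝ) * (∏ n : Fin N, s n r) ^ ((2:ℝ)/N) := by
            rw [Finset.mul_sum, Finset.mul_sum]
            apply Finset.sum_congr rfl
            intro r _
            ring
        _ ≤ lam / 2 * ∑ r : Fin R, ∑ n : Fin N, ∑ j : Fin (I n),
              A n j r * (Rm n j)⁻¹ * A n j r := by
            apply mul_le_mul_of_nonneg_left
            · exact Finset.sum_le_sum fun r _ => hpen r
            · positivity


end Aux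

/-- Value-equality half of Proposition 1: the infima of problems (12) and (14) coincide. -/
theorem inf_f1_eq_inf_f2 (N R : ℕ) (hN : 1 ≤ N) (hR : 1 ≤ R)
    (I : Fin N → ℕ) (hI : ∀ n, 1 ≤ I n)
    (Z Δ : (∀ n : Fin N, Fin (I n)) → ℝ)
    (hΔ : ∀ i, Δ i = 0 ∨ Δ i = 1)
    (lam : ℝ) (hlam : 0 < lam)
    (Rm : ∀ n : Fin N, Fin (I n) → ℝ)
    (hRm : ∀ n j, 0 < Rm n j) :
    sInf {y : ℝ | ∃ A : ∀ n : Fin N, Fin (I n) → Fin R → ℝ,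
        y = f1 N R I Z Δ lam Rm A} =
    sInf {y : ℝ | ∃ (U : ∀ n : Fin N, Fin R → Fin (I n) → ℝ) (γ : Fin R → ℝ),
        (∀ n r, ∑ j : Fin (I n), U n r j ^ 2 = 1) ∧ (∀ r, 0 ≤ γ r) ∧
        y = f2 N R I Z Δ lam Rm U γ} := by
  obtain ⟨U0, γ0, hU0, hγ0, hle0⟩ :=
    construct2 (Z := Z) (Δ := Δ) hN hI hlam hRm (fun _ _ _ => 0)
  have hS1ne : {y : ℝ | ∃ A : ∀ n : Fin N, Fin (I n) → Fin R → ℝ,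
      y = f1 N R I Z Δ lam Rm A}.Nonempty := ⟨_, fun _ _ _ => 0, rfl⟩
  have hS2ne : {y : ℝ | ∃ (U : ∀ n : Fin N, Fin R → Fin (I n) → ℝ) (γ : Fin R → ℝ),
      (∀ n r, ∑ j : Fin (I n), U n r j ^ 2 = 1) ∧ (∀ r, 0 ≤ γ r) ∧
      y = f2 N R I Z Δ lam Rm U γ}.Nonempty := ⟨_, U0, γ0, hU0, hγ0, rfl⟩
  have hbdd1 : BddBelow {y : ℝ | ∃ A : ∀ n : Fin N, Fin (I n) → Fin R → ℝ,
      y = f1 N R I Z Δ lam Rm A} := by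
    refine ⟨0, ?_⟩
    rintro y ⟨A, rfl⟩
    exact f1_nonneg hΔ hlam hRm A
  have hbdd2 : BddBelow {y : ℝ | ∃ (U : ∀ n : Fin N, Fin R → Fin (I n) → ℝ)
      (γ : Fin R → ℝ),
      (∀ n r, ∑ j : Fin (I n), U n r j ^ 2 = 1) ∧ (∀ r, 0 ≤ γ r) ∧
      y = f2 N R I Z Δ lam Rm U γ} := by
    refine ⟨0, ?_⟩
    rintro y ⟨U, γ, hU, hγ, rfl⟩
    exact f2_nonneg hΔ hlam U γ hγ
  apply le_antisymm
  · apply le_csInf hS2ne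
    rintro y ⟨U, γ, hU, hγ, rfl⟩
    exact csInf_le hbdd1 ⟨_, (construct1 hN hRm U γ hU hγ).symm⟩
  · apply le_csInf hS1ne
    rintro y ⟨A, rfl⟩
    obtain ⟨U, γ, hU, hγ, hle⟩ := construct2 hN hI hlam hRm A
    exact le_trans (csInf_le hbdd2 ⟨U, γ, hU, hγ, rfl⟩) hle
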